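/- Let (β_t) be standard Brownian motion, g ∈ C([0,T]) deterministic, and for n ≥ 1 set Jₙ(t) = ∫_{[2ⁿt]/2ⁿ}^{t} g(s) dβ(s). Then E[ sup_{0≤t≤T} |Jₙ(t)|² ] → 0 as n → ∞. -/

import Mathlib

open MeasureTheory ProbabilityTheory Filter
open Real NNReal ENNReal

lemma WID.integrable_pow4_exp {b : ℝ} (hb : 0 < b) :
    Integrable (fun x : ℝ => x ^ 4 * Real.exp (-b * x ^ 2)) := by
  have hg : Integrable (fun x : ℝ => (16 / b ^ 2) * Real.exp (-(b / 2) * x ^ 2)) :=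
    (integrable_exp_neg_mul_sq (by linarith)).const_mul _
  refine hg.mono' (Continuous.aestronglyMeasurable (by continuity)) (ae_of_all _ fun x => ?_)
  have h0 : (0:ℝ) ≤ x ^ 4 * Real.exp (-b * x ^ 2) := by positivity
  rw [Real.norm_eq_abs, abs_of_nonneg h0]
  have h2 : b / 4 * x ^ 2 + 1 ≤ Real.exp (b / 4 * x ^ 2) := by
    have := Real.add_one_le_exp (b / 4 * x ^ 2); linarith
  have h3 : (b / 4 * x ^ 2) ^ 2 ≤ Real.exp (b / 4 * x ^ 2) ^ 2 := by
    have h4 : (0:ℝ) ≤ b / 4 * x ^ 2 := by positivity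
    have := pow_le_pow_left₀ h4 (le_trans (by linarith) h2) 2
    exact this
  have h5 : Real.exp (b / 4 * x ^ 2) ^ 2 = Real.exp (b / 2 * x ^ 2) := by
    rw [← Real.exp_nat_mul]; ring_nf
  have h6 : b ^ 2 * x ^ 4 / 16 ≤ Real.exp (b / 2 * x ^ 2) := by
    rw [← h5]; nlinarith [h3]
  have hepos : (0:ℝ) < Real.exp (-b * x ^ 2) := Real.exp_pos _
  have hb2 : (0:ℝ) < b ^ 2 := by positivity
  calc x ^ 4 * Real.exp (-b * x ^ 2)
      = (b ^ 2 * x ^ 4 / 16) * Real.exp (-b * x ^ 2) * (16 / b ^ 2) := by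
        field_simp
    _ ≤ Real.exp (b / 2 * x ^ 2) * Real.exp (-b * x ^ 2) * (16 / b ^ 2) := by
        gcongr
    _ = 16 / b ^ 2 * Real.exp (-(b / 2) * x ^ 2) := by
        rw [← Real.exp_add]; ring_nf

lemma WID.integrable_pow4_gaussian (v : ℝ≥0) :
    Integrable (fun x : ℝ => x ^ 4) (gaussianReal 0 v) := by
  rcases eq_or_ne v 0 with h | h
  · rw [h, gaussianReal_zero_var]
    refine ⟨(measurable_id.pow_const 4).aestronglyMeasurable, ?_⟩
    rw [HasFiniteIntegral]
    rw [lintegral_dirac' _ (by fun_prop)]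
    simp
  · rw [gaussianReal_of_var_ne_zero _ h,
      integrable_withDensity_iff (measurable_gaussianPDF _ _)
        (ae_of_all _ fun x => ENNReal.ofReal_lt_top)]
    have hv : (0:ℝ) < v := lt_of_le_of_ne v.2 (by exact_mod_cast (Ne.symm h))
    have : (fun x : ℝ => x ^ 4 * (gaussianPDF 0 v x).toReal)
        = fun x => (√(2 * π * v))⁻¹ * (x ^ 4 * Real.exp (-(2 * (v:ℝ))⁻¹ * x ^ 2)) := by
      ext x
      rw [gaussianPDF, ENNReal.toReal_ofReal (gaussianPDFReal_nonneg _ _ _), gaussianPDFReal]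
      rw [sub_zero]
      ring_nf
    rw [this]
    exact ((WID.integrable_pow4_exp (by positivity)).const_mul _)

lemma WID.integral_pow4_gaussian (v : ℝ≥0) :
    ∫ x, x ^ 4 ∂(gaussianReal 0 v) = (v:ℝ) ^ 2 * ∫ x, x ^ 4 ∂(gaussianReal 0 (1:ℝ≥0)) := by
  have h := gaussianReal_map_const_mul (μ := 0) (v := 1) (Real.sqrt v)
  have hv : (NNReal.mk (Real.sqrt v ^ 2) (sq_nonneg _) * 1 : ℝ≥0) = v := by
    rw [mul_one]; ext; simp [Real.sq_sqrt v.coe_nonneg]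
  rw [mul_zero, hv] at h
  rw [← h, integral_map (by fun_prop) (by fun_prop)]
  have : ∀ x : ℝ, (Real.sqrt v * x) ^ 4 = (v:ℝ) ^ 2 * x ^ 4 := by
    intro x
    have : Real.sqrt v ^ 4 = (v:ℝ) ^ 2 := by
      calc Real.sqrt v ^ 4 = (Real.sqrt v ^ 2) ^ 2 := by ring
        _ = (v:ℝ) ^ 2 := by rw [Real.sq_sqrt v.coe_nonneg]
    rw [mul_pow, this]
  simp_rw [this, integral_const_mul]

lemma WID.rv4 {Ω : Type*} [MeasureSpace Ω] [IsProbabilityMeasure (ℙ : Measure Ω)]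
    {X : Ω → ℝ} (hX : Measurable X) (v : ℝ≥0)
    (hmap : Measure.map X ℙ = gaussianReal 0 v) :
    Integrable (fun ω => X ω ^ 4) ℙ ∧
      ∫ ω, X ω ^ 4 ∂ℙ = (v:ℝ) ^ 2 * ∫ x, x ^ 4 ∂(gaussianReal 0 (1:ℝ≥0)) := by
  have h1 : Integrable (fun x : ℝ => x ^ 4) (Measure.map X ℙ) := by
    rw [hmap]; exact WID.integrable_pow4_gaussian v
  have h2 := integral_map (μ := ℙ) hX.aemeasurable
      (f := fun x : ℝ => x ^ 4) (by fun_prop)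
  constructor
  · have := (integrable_map_measure (by fun_prop) hX.aemeasurable).mp h1
    exact this
  · rw [← h2, hmap, WID.integral_pow4_gaussian]

lemma WID.geom_Ioc {ρ : ℝ} (h0 : 0 ≤ ρ) (h1 : ρ < 1) (n N : ℕ) :
    ∑ m ∈ Finset.Ioc n N, ρ ^ m ≤ ρ ^ (n + 1) * (1 - ρ)⁻¹ := by
  have h2 : (0:ℝ) < 1 - ρ := by linarith
  rcases le_or_gt n N with hnN | hnN
  · have key : ∀ K, n ≤ K →
        ∑ m ∈ Finset.Ioc n K, ρ ^ m ≤ (ρ ^ (n + 1) - ρ ^ (K + 1)) * (1 - ρ)⁻¹ := by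
      intro K hK
      induction K, hK using Nat.le_induction with
      | base => simp
      | succ K hK ih =>
        rw [Finset.sum_Ioc_succ_top hK]
        have heq : (ρ ^ (n + 1) - ρ ^ (K + 1)) * (1 - ρ)⁻¹ + ρ ^ (K + 1)
            = (ρ ^ (n + 1) - ρ ^ (K + 1 + 1)) * (1 - ρ)⁻¹ := by
          field_simp; ring
        linarith [ih]
    refine le_trans (key N hnN) ?_
    have : ρ ^ (n + 1) - ρ ^ (N + 1) ≤ ρ ^ (n + 1) := by
      have : (0:ℝ) ≤ ρ ^ (N + 1) := by positivity
      linarith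
    exact mul_le_mul_of_nonneg_right this (by positivity)
  · rw [Finset.Ioc_eq_empty (by omega)]
    simp only [Finset.sum_empty]
    positivity

lemma WID.sq_eLpNorm {Ω : Type*} [MeasureSpace Ω] (f : Ω → ℝ) (hnn : ∀ ω, 0 ≤ f ω) :
    (eLpNorm f 2 ℙ) ^ 2 = ∫⁻ ω, (ENNReal.ofReal (f ω)) ^ 2 ∂ℙ := by
  rw [eLpNorm_eq_lintegral_rpow_enorm_toReal (by norm_num) (by norm_num)]
  have h1 : ∀ ω, ‖f ω‖ₑ ^ ((2:ℝ≥0∞).toReal) = (ENNReal.ofReal (f ω)) ^ (2:ℕ) := by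
    intro ω
    rw [Real.enorm_eq_ofReal (hnn ω)]
    rw [show ((2:ℝ≥0∞).toReal) = ((2:ℕ):ℝ) by norm_num, ENNReal.rpow_natCast]
  simp_rw [h1]
  rw [← ENNReal.rpow_natCast _ 2, ← ENNReal.rpow_mul]
  norm_num

lemma WID.eLpNorm_quarter {Ω : Type*} [MeasureSpace Ω] [IsProbabilityMeasure (ℙ : Measure Ω)]
    {S : Ω → ℝ} (hm : Measurable S) (hnn : ∀ ω, 0 ≤ S ω) :
    eLpNorm (fun ω => S ω ^ ((1:ℝ)/4)) 2 ℙ ≤ (∫⁻ ω, ENNReal.ofReal (S ω) ∂ℙ) ^ ((1:ℝ)/4) := by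
  rw [eLpNorm_eq_lintegral_rpow_enorm_toReal (by norm_num) (by norm_num)]
  have h1 : ∀ ω, ‖S ω ^ ((1:ℝ)/4)‖ₑ ^ ((2:ℝ≥0∞).toReal)
      = ENNReal.ofReal (S ω ^ ((1:ℝ)/2)) := by
    intro ω
    rw [Real.enorm_eq_ofReal (Real.rpow_nonneg (hnn ω) _),
      show ((2:ℝ≥0∞).toReal) = (2:ℝ) by norm_num,
      ENNReal.ofReal_rpow_of_nonneg (Real.rpow_nonneg (hnn ω) _) (by norm_num),
      ← Real.rpow_mul (hnn ω)]
    norm_num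
  simp_rw [h1]
  -- Cauchy-Schwarz
  have hconj : Real.HolderConjugate 2 2 := Real.HolderConjugate.two_two
  have hrm : ∀ p : ℝ, 0 ≤ p → Measurable (fun x : ℝ => x ^ p) := fun p hp =>
    (continuous_id.rpow_const (fun x => Or.inr hp)).measurable
  have hf : AEMeasurable (fun ω => ENNReal.ofReal (S ω ^ ((1:ℝ)/2))) ℙ :=
    (((hrm _ (by norm_num)).comp hm).ennreal_ofReal).aemeasurable
  have CS := ENNReal.lintegral_mul_le_Lp_mul_Lq ℙ hconj hf aemeasurable_const
      (g := fun _ => (1:ℝ≥0∞))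
  simp only [Pi.mul_apply, mul_one] at CS
  have h2 : ∀ ω, (ENNReal.ofReal (S ω ^ ((1:ℝ)/2))) ^ (2:ℝ) = ENNReal.ofReal (S ω) := by
    intro ω
    rw [ENNReal.ofReal_rpow_of_nonneg (Real.rpow_nonneg (hnn ω) _) (by norm_num),
      ← Real.rpow_mul (hnn ω)]
    norm_num
  simp_rw [h2] at CS
  simp only [ENNReal.one_rpow, lintegral_one, measure_univ, mul_one] at CS
  calc (∫⁻ ω, ENNReal.ofReal (S ω ^ ((1:ℝ)/2)) ∂ℙ) ^ (1/(2:ℝ≥0∞).toReal)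
      = (∫⁻ ω, ENNReal.ofReal (S ω ^ ((1:ℝ)/2)) ∂ℙ) ^ ((1:ℝ)/2) := by norm_num
    _ ≤ ((∫⁻ ω, ENNReal.ofReal (S ω) ∂ℙ) ^ ((1:ℝ)/2)) ^ ((1:ℝ)/2) := by
        exact ENNReal.rpow_le_rpow CS (by norm_num)
    _ = (∫⁻ ω, ENNReal.ofReal (S ω) ∂ℙ) ^ ((1:ℝ)/4) := by
        rw [← ENNReal.rpow_mul]; norm_num

/-- With `M(t) = ∫₀ᵗ g dβ` the Wiener integral of a deterministic continuous `g`
(characterized by its centered Gaussian increments and continuous paths), and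
`Jₙ(t) = M(t) − M(⌊2ⁿt⌋/2ⁿ)`, one has `E[sup_{0≤t≤T} |Jₙ(t)|²] → 0` as `n → ∞`. -/
theorem wiener_integral_dyadic_tail
    {Ω : Type*} [MeasureSpace Ω] [IsProbabilityMeasure (ℙ : Measure Ω)]
    (T : ℝ) (hT : 0 < T) (g : ℝ → ℝ) (hg : Continuous g)
    (M : ℝ → Ω → ℝ) (hmeas : ∀ t, Measurable (M t))
    (hcont : ∀ ω, Continuous fun t => M t ω)
    (hgauss : ∀ s t : ℝ, 0 ≤ s → s ≤ t → t ≤ T →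
      Measure.map (fun ω => M t ω - M s ω) ℙ
        = gaussianReal 0 (Real.toNNReal (∫ r in s..t, (g r)^2))) :
    Tendsto (fun n : ℕ =>
        ∫ ω, (⨆ t : Set.Icc (0:ℝ) T,
          |M (t:ℝ) ω - M ((⌊(2:ℝ)^n * (t:ℝ)⌋ : ℝ) / (2:ℝ)^n) ω|) ^ 2 ∂ℙ)
      atTop (nhds 0) := by
  classical
  haveI hne : Nonempty (Set.Icc (0:ℝ) T) := (Set.nonempty_Icc.2 hT.le).to_subtype
  -- bound on g
  obtain ⟨K, hK0, hK⟩ : ∃ K, 0 ≤ K ∧ ∀ x ∈ Set.Icc (0:ℝ) T, |g x| ≤ K := by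
    obtain ⟨C, hC⟩ := isCompact_Icc.exists_bound_of_continuousOn hg.continuousOn
    exact ⟨max C 0, le_max_right _ _, fun x hx => (hC x hx).trans (le_max_left _ _)⟩
  set C4 : ℝ := ∫ x, x ^ 4 ∂(gaussianReal 0 (1:ℝ≥0)) with hC4def
  have hC40 : 0 ≤ C4 := integral_nonneg fun x => by positivity
  -- grid increments
  set Δ : ℕ → ℕ → Ω → ℝ := fun m k ω => M (((k:ℝ)+1)/2^m) ω - M ((k:ℝ)/2^m) ω with hΔdef
  set Fm : ℕ → Finset ℕ := fun m => Finset.range (Nat.floor ((2:ℝ)^m * T)) with hFmdef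
  set vv : ℕ → ℕ → ℝ≥0 :=
    fun m k => Real.toNNReal (∫ r in ((k:ℝ)/2^m)..(((k:ℝ)+1)/2^m), (g r)^2) with hvvdef
  have hΔmeas : ∀ m k, Measurable (Δ m k) := fun m k => (hmeas _).sub (hmeas _)
  have h2pos : ∀ m : ℕ, (0:ℝ) < 2 ^ m := fun m => by positivity
  have hmem : ∀ m k, k ∈ Fm m →
      0 ≤ (k:ℝ)/2^m ∧ (k:ℝ)/2^m ≤ ((k:ℝ)+1)/2^m ∧ ((k:ℝ)+1)/2^m ≤ T := by
    intro m k hk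
    have hk' : (k:ℝ) + 1 ≤ (2:ℝ)^m * T := by
      rw [hFmdef] at hk
      simp only [Finset.mem_range] at hk
      have h1 : (k:ℝ) + 1 ≤ (Nat.floor ((2:ℝ)^m * T) : ℝ) := by exact_mod_cast hk
      exact h1.trans (Nat.floor_le (by positivity))
    refine ⟨by positivity, by gcongr <;> linarith, ?_⟩
    rw [div_le_iff₀ (h2pos m)]
    linarith [hk']
  have hlaw : ∀ m k, k ∈ Fm m → Measure.map (Δ m k) ℙ = gaussianReal 0 (vv m k) := by
    intro m k hk
    obtain ⟨h1, h2, h3⟩ := hmem m k hk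
    exact hgauss _ _ h1 h2 h3
  have hvar : ∀ m k, k ∈ Fm m → ((vv m k : ℝ)) ≤ K^2 * ((2:ℝ)^m)⁻¹ := by
    intro m k hk
    obtain ⟨h1, h2, h3⟩ := hmem m k hk
    have hB : 0 ≤ K^2 * ((2:ℝ)^m)⁻¹ := by positivity
    rw [hvvdef]
    simp only [Real.coe_toNNReal']
    rw [max_le_iff]
    refine ⟨?_, hB⟩
    have hint : ∫ r in ((k:ℝ)/2^m)..(((k:ℝ)+1)/2^m), (g r)^2
        ≤ ∫ r in ((k:ℝ)/2^m)..(((k:ℝ)+1)/2^m), K^2 := by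
      apply intervalIntegral.integral_mono_on h2
        ((hg.pow 2).intervalIntegrable _ _) (intervalIntegrable_const)
      intro r hr
      have hr0 : 0 ≤ r := le_trans h1 hr.1
      have hrT : r ≤ T := le_trans hr.2 h3
      have := hK r ⟨hr0, hrT⟩
      have h4 : g r ^ 2 = |g r|^2 := (sq_abs _).symm
      rw [Pi.pow_apply, h4]
      exact pow_le_pow_left₀ (abs_nonneg _) this 2
    rw [intervalIntegral.integral_const, smul_eq_mul] at hint
    have : (((k:ℝ)+1)/2^m - (k:ℝ)/2^m) = ((2:ℝ)^m)⁻¹ := by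
      field_simp
      ring
    rw [this] at hint
    linarith [hint]
  -- sums of fourth powers
  set S : ℕ → Ω → ℝ := fun m ω => ∑ k ∈ Fm m, (Δ m k ω)^4 with hSdef
  have hSmeas : ∀ m, Measurable (S m) :=
    fun m => Finset.measurable_sum _ fun k _ => ((hΔmeas m k).pow_const 4)
  have hSnn : ∀ m ω, 0 ≤ S m ω := fun m ω => Finset.sum_nonneg fun k _ => by positivity
  have hSint : ∀ m, Integrable (S m) ℙ := fun m =>
    integrable_finset_sum _ fun k hk => (WID.rv4 (hΔmeas m k) _ (hlaw m k hk)).1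
  set A : ℝ := C4 * K^4 * T with hAdef
  have hA0 : 0 ≤ A := by positivity
  have hSmean : ∀ m, ∫ ω, S m ω ∂ℙ ≤ A * ((2:ℝ)^m)⁻¹ := by
    intro m
    rw [hSdef]
    simp only
    rw [integral_finset_sum _ (fun k hk => (WID.rv4 (hΔmeas m k) _ (hlaw m k hk)).1)]
    have hterm : ∀ k ∈ Fm m,
        ∫ ω, (Δ m k ω)^4 ∂ℙ ≤ (K^2 * ((2:ℝ)^m)⁻¹)^2 * C4 := by
      intro k hk
      rw [(WID.rv4 (hΔmeas m k) _ (hlaw m k hk)).2, ← hC4def]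
      apply mul_le_mul_of_nonneg_right _ hC40
      exact pow_le_pow_left₀ (vv m k).coe_nonneg (hvar m k hk) 2
    refine le_trans (Finset.sum_le_card_nsmul _ _ _ hterm) ?_
    rw [nsmul_eq_mul]
    calc ((Fm m).card : ℝ) * ((K^2 * ((2:ℝ)^m)⁻¹)^2 * C4)
        ≤ ((2:ℝ)^m * T) * ((K^2 * ((2:ℝ)^m)⁻¹)^2 * C4) := by
          apply mul_le_mul_of_nonneg_right _ (by positivity)
          rw [hFmdef]
          simp only [Finset.card_range]
          exact Nat.floor_le (by positivity : (0:ℝ) ≤ (2:ℝ)^m * T)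
      _ = A * ((2:ℝ)^m)⁻¹ := by
          rw [hAdef]
          field_simp
  have hSlint : ∀ m, ∫⁻ ω, ENNReal.ofReal (S m ω) ∂ℙ ≤ ENNReal.ofReal (A * ((2:ℝ)^m)⁻¹) := by
    intro m
    rw [← ofReal_integral_eq_lintegral_ofReal (hSint m) (ae_of_all _ (hSnn m))]
    exact ENNReal.ofReal_le_ofReal (hSmean m)
  -- the chaining sums
  set G : ℕ → ℕ → Ω → ℝ := fun n N ω => ∑ m ∈ Finset.Ioc n N, (S m ω) ^ ((1:ℝ)/4)
    with hGdef
  have hGmeas : ∀ n N, Measurable (G n N) := by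
    intro n N
    apply Finset.measurable_sum
    intro m _
    exact ((continuous_id.rpow_const fun x => Or.inr (by norm_num)).measurable).comp (hSmeas m)
  have hGnn : ∀ n N ω, 0 ≤ G n N ω := fun n N ω =>
    Finset.sum_nonneg fun m _ => Real.rpow_nonneg (hSnn m ω) _
  have hGmono : ∀ n N N', N ≤ N' → ∀ ω, G n N ω ≤ G n N' ω := by
    intro n N N' hNN' ω
    apply Finset.sum_le_sum_of_subset_of_nonneg
      (Finset.Ioc_subset_Ioc_right hNN')
    intro m _ _
    exact Real.rpow_nonneg (hSnn m ω) _
  -- step estimate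
  have key1 : ∀ t : ℝ, 0 ≤ t → t ≤ T → ∀ N : ℕ, ∀ ω,
      |M ((⌊(2:ℝ)^(N+1) * t⌋ : ℝ)/2^(N+1)) ω - M ((⌊(2:ℝ)^N * t⌋ : ℝ)/2^N) ω|
        ≤ (S (N+1) ω) ^ ((1:ℝ)/4) := by
    intro t ht0 htT N ω
    have hx0 : (0:ℝ) ≤ (2:ℝ)^N * t := by positivity
    set x : ℝ := (2:ℝ)^N * t with hxdef
    have h2x : (2:ℝ)^(N+1) * t = 2 * x := by rw [hxdef]; ring
    have hk0 : (0:ℤ) ≤ ⌊x⌋ := Int.floor_nonneg.2 hx0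
    have hcase : ⌊(2:ℝ)*x⌋ = 2*⌊x⌋ ∨ ⌊(2:ℝ)*x⌋ = 2*⌊x⌋ + 1 := by
      have h1 : (2*⌊x⌋ : ℤ) ≤ ⌊(2:ℝ)*x⌋ := by
        apply Int.le_floor.2
        push_cast
        linarith [Int.floor_le x]
      have h2 : ⌊(2:ℝ)*x⌋ < 2*⌊x⌋ + 2 := by
        apply Int.floor_lt.2
        push_cast
        linarith [Int.lt_floor_add_one x]
      omega
    have hSnn4 : (0:ℝ) ≤ (S (N+1) ω) ^ ((1:ℝ)/4) := Real.rpow_nonneg (hSnn _ _) _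
    rcases hcase with hc | hc
    · have heq : (⌊(2:ℝ)^(N+1) * t⌋ : ℝ)/2^(N+1) = (⌊x⌋ : ℝ)/2^N := by
        rw [h2x, hc]
        push_cast
        field_simp
        ring
      rw [heq, sub_self, abs_zero]
      exact hSnn4
    · set k : ℕ := ⌊x⌋.toNat with hkdef
      have hkZ : (k:ℤ) = ⌊x⌋ := Int.toNat_of_nonneg hk0
      have hmemk : 2*k ∈ Fm (N+1) := by
        rw [hFmdef]
        simp only [Finset.mem_range]
        have h1 : ⌊(2:ℝ)*x⌋ ≤ ⌊(2:ℝ)^(N+1) * T⌋ := by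
          apply Int.floor_le_floor
          rw [← h2x]
          have := h2pos (N+1)
          nlinarith
        have h2 : (0:ℤ) ≤ ⌊(2:ℝ)^(N+1)*T⌋ := Int.floor_nonneg.2 (by positivity)
        have h3 : (Nat.floor ((2:ℝ)^(N+1)*T) : ℕ) = (⌊(2:ℝ)^(N+1)*T⌋).toNat :=
          (Int.floor_toNat _).symm
        omega
      have heq1 : (⌊x⌋ : ℝ)/2^N = ((2*k : ℕ):ℝ)/2^(N+1) := by
        rw [← hkZ]
        push_cast
        field_simp
        ring
      have heq2 : (⌊(2:ℝ)^(N+1) * t⌋ : ℝ)/2^(N+1) = (((2*k:ℕ):ℝ)+1)/2^(N+1) := by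
        rw [h2x, hc, ← hkZ]
        push_cast
        ring
      rw [heq1, heq2]
      have hDelta : M ((((2*k:ℕ):ℝ)+1)/2^(N+1)) ω - M (((2*k:ℕ):ℝ)/2^(N+1)) ω
          = Δ (N+1) (2*k) ω := by rw [hΔdef]
      rw [hDelta]
      have h5 : (Δ (N+1) (2*k) ω)^4 ≤ S (N+1) ω := by
        have h5' := Finset.single_le_sum (f := fun i => (Δ (N+1) i ω)^4)
          (fun i _ => by positivity) hmemk
        rw [hSdef]
        simpa using h5'
      have h6 : |Δ (N+1) (2*k) ω| = ((Δ (N+1) (2*k) ω)^4) ^ ((1:ℝ)/4) := by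
        have h7 : (Δ (N+1) (2*k) ω)^4 = |Δ (N+1) (2*k) ω|^4 := by
          rw [← abs_pow]
          exact (abs_of_nonneg (by positivity)).symm
        rw [h7, ← Real.rpow_natCast |Δ (N+1) (2*k) ω| 4,
          ← Real.rpow_mul (abs_nonneg _)]
        norm_num
      rw [h6]
      exact Real.rpow_le_rpow (by positivity) h5 (by norm_num)
  -- telescoping
  have key2 : ∀ t : ℝ, 0 ≤ t → t ≤ T → ∀ ω, ∀ n N : ℕ, n ≤ N →
      |M ((⌊(2:ℝ)^N * t⌋ : ℝ)/2^N) ω - M ((⌊(2:ℝ)^n * t⌋ : ℝ)/2^n) ω| ≤ G n N ω := by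
    intro t ht0 htT ω n N hnN
    induction N, hnN using Nat.le_induction with
    | base => simp [hGdef]
    | succ N hN ih =>
      have h1 := key1 t ht0 htT N ω
      have h2 : G n (N+1) ω = G n N ω + (S (N+1) ω) ^ ((1:ℝ)/4) := by
        rw [hGdef]
        simp only
        rw [Finset.sum_Ioc_succ_top hN]
      calc |M ((⌊(2:ℝ)^(N+1) * t⌋ : ℝ)/2^(N+1)) ω - M ((⌊(2:ℝ)^n * t⌋ : ℝ)/2^n) ω|
          ≤ |M ((⌊(2:ℝ)^(N+1) * t⌋ : ℝ)/2^(N+1)) ω - M ((⌊(2:ℝ)^N * t⌋ : ℝ)/2^N) ω|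
            + |M ((⌊(2:ℝ)^N * t⌋ : ℝ)/2^N) ω - M ((⌊(2:ℝ)^n * t⌋ : ℝ)/2^n) ω| :=
            abs_sub_le _ _ _
        _ ≤ (S (N+1) ω) ^ ((1:ℝ)/4) + G n N ω := add_le_add h1 ih
        _ = G n (N+1) ω := by rw [h2]; ring
  -- passage to the limit
  have key3 : ∀ t : ℝ, 0 ≤ t → t ≤ T → ∀ ω, ∀ n : ℕ, ∀ b : ℝ,
      (∀ N, G n N ω ≤ b) → |M t ω - M ((⌊(2:ℝ)^n * t⌋ : ℝ)/2^n) ω| ≤ b := by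
    intro t ht0 htT ω n b hb
    have hfl_le : ∀ m : ℕ, (⌊(2:ℝ)^m * t⌋ : ℝ)/2^m ≤ t := by
      intro m
      rw [div_le_iff₀ (h2pos m)]
      calc (⌊(2:ℝ)^m * t⌋ : ℝ) ≤ (2:ℝ)^m * t := Int.floor_le _
        _ = t * 2^m := by ring
    have hfl_ge : ∀ m : ℕ, t - ((2:ℝ)^m)⁻¹ ≤ (⌊(2:ℝ)^m * t⌋ : ℝ)/2^m := by
      intro m
      rw [le_div_iff₀ (h2pos m)]
      have h1 := Int.lt_floor_add_one ((2:ℝ)^m * t)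
      have h2 : (t - ((2:ℝ)^m)⁻¹) * 2^m = 2^m * t - 1 := by
        field_simp
      linarith
    have htendfl : Tendsto (fun m : ℕ => (⌊(2:ℝ)^m * t⌋ : ℝ)/2^m) atTop (nhds t) := by
      have hlow : Tendsto (fun m : ℕ => t - ((2:ℝ)^m)⁻¹) atTop (nhds (t - 0)) :=
        tendsto_const_nhds.sub (tendsto_pow_atTop_atTop_of_one_lt (by norm_num : (1:ℝ) < 2)).inv_tendsto_atTop
      rw [sub_zero] at hlow
      exact tendsto_of_tendsto_of_tendsto_of_le_of_le hlow tendsto_const_nhds hfl_ge hfl_le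
    have hM : Tendsto (fun N : ℕ => M ((⌊(2:ℝ)^N * t⌋ : ℝ)/2^N) ω) atTop (nhds (M t ω)) :=
      ((hcont ω).tendsto t).comp htendfl
    have habs : Tendsto (fun N : ℕ =>
        |M ((⌊(2:ℝ)^N * t⌋ : ℝ)/2^N) ω - M ((⌊(2:ℝ)^n * t⌋ : ℝ)/2^n) ω|) atTop
        (nhds (|M t ω - M ((⌊(2:ℝ)^n * t⌋:ℝ)/2^n) ω|)) :=
      (hM.sub tendsto_const_nhds).abs
    refine le_of_tendsto habs ?_
    filter_upwards [eventually_ge_atTop n] with N hN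
    exact (key2 t ht0 htT ω n N hN).trans (hb N)
  -- pointwise domination of the sup
  have key4 : ∀ n : ℕ, ∀ ω, ENNReal.ofReal ((⨆ t : Set.Icc (0:ℝ) T,
      |M (t:ℝ) ω - M ((⌊(2:ℝ)^n * (t:ℝ)⌋ : ℝ) / (2:ℝ)^n) ω|) ^ 2)
      ≤ ⨆ N, (ENNReal.ofReal (G n N ω)) ^ 2 := by
    intro n ω
    have hswap : (⨆ N, ENNReal.ofReal (G n N ω))^2 ≤ ⨆ N, (ENNReal.ofReal (G n N ω))^2 := by
      rw [sq, ENNReal.iSup_mul]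
      refine iSup_le fun i => ?_
      rw [ENNReal.mul_iSup]
      refine iSup_le fun j => ?_
      calc ENNReal.ofReal (G n i ω) * ENNReal.ofReal (G n j ω)
          ≤ ENNReal.ofReal (G n (max i j) ω) * ENNReal.ofReal (G n (max i j) ω) :=
            mul_le_mul' (ENNReal.ofReal_le_ofReal (hGmono n i _ (le_max_left _ _) ω))
              (ENNReal.ofReal_le_ofReal (hGmono n j _ (le_max_right _ _) ω))
        _ ≤ ⨆ N, (ENNReal.ofReal (G n N ω))^2 := by
            rw [← sq]
            exact le_iSup (fun N => (ENNReal.ofReal (G n N ω))^2) (max i j)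
    refine le_trans ?_ hswap
    have hsupnn : 0 ≤ ⨆ t : Set.Icc (0:ℝ) T,
        |M (t:ℝ) ω - M ((⌊(2:ℝ)^n * (t:ℝ)⌋ : ℝ) / (2:ℝ)^n) ω| :=
      Real.iSup_nonneg fun t => abs_nonneg _
    rw [ENNReal.ofReal_pow hsupnn]
    gcongr
    by_cases htop : (⨆ N, ENNReal.ofReal (G n N ω)) = ⊤
    · rw [htop]; exact le_top
    · have hb : ∀ N, G n N ω ≤ (⨆ N, ENNReal.ofReal (G n N ω)).toReal := by
        intro N
        have h1 : ENNReal.ofReal (G n N ω) ≤ ⨆ N, ENNReal.ofReal (G n N ω) :=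
          le_iSup (fun N => ENNReal.ofReal (G n N ω)) N
        have h2 := ENNReal.toReal_mono htop h1
        rwa [ENNReal.toReal_ofReal (hGnn n N ω)] at h2
      have hval : ∀ t : Set.Icc (0:ℝ) T,
          |M (t:ℝ) ω - M ((⌊(2:ℝ)^n * (t:ℝ)⌋ : ℝ) / (2:ℝ)^n) ω|
          ≤ (⨆ N, ENNReal.ofReal (G n N ω)).toReal :=
        fun t => key3 t t.2.1 t.2.2 ω n _ hb
      calc ENNReal.ofReal (⨆ t : Set.Icc (0:ℝ) T,
            |M (t:ℝ) ω - M ((⌊(2:ℝ)^n * (t:ℝ)⌋ : ℝ) / (2:ℝ)^n) ω|)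
          ≤ ENNReal.ofReal ((⨆ N, ENNReal.ofReal (G n N ω)).toReal) :=
            ENNReal.ofReal_le_ofReal (ciSup_le hval)
        _ = ⨆ N, ENNReal.ofReal (G n N ω) := ENNReal.ofReal_toReal htop
  -- L² estimate
  set ρ : ℝ := ((2:ℝ)⁻¹) ^ ((1:ℝ)/4) with hρdef
  have hρ0 : 0 < ρ := Real.rpow_pos_of_pos (by norm_num) _
  have hρ1 : ρ < 1 := Real.rpow_lt_one (by norm_num) (by norm_num) (by norm_num)
  have key5 : ∀ n N : ℕ, ∫⁻ ω, (ENNReal.ofReal (G n N ω)) ^ 2 ∂ℙ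
      ≤ (ENNReal.ofReal (A ^ ((1:ℝ)/4) * ρ^(n+1) * (1-ρ)⁻¹)) ^ 2 := by
    intro n N
    have e1 : ∫⁻ ω, (ENNReal.ofReal (G n N ω))^2 ∂ℙ = (eLpNorm (G n N) 2 ℙ)^2 :=
      (WID.sq_eLpNorm _ (hGnn n N)).symm
    rw [e1]
    have e2 : eLpNorm (G n N) 2 ℙ ≤ ENNReal.ofReal (A^((1:ℝ)/4) * ρ^(n+1) * (1-ρ)⁻¹) := by
      have hGsum : G n N = ∑ m ∈ Finset.Ioc n N, (fun ω => (S m ω) ^ ((1:ℝ)/4)) := by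
        funext ω
        rw [hGdef]
        simp [Finset.sum_apply]
      rw [hGsum]
      refine le_trans (eLpNorm_sum_le ?_ one_le_two) ?_
      · intro m _
        exact (((continuous_id.rpow_const fun x => Or.inr (by norm_num)).measurable).comp
          (hSmeas m)).aestronglyMeasurable
      · have hterm : ∀ m ∈ Finset.Ioc n N,
            eLpNorm (fun ω => (S m ω) ^ ((1:ℝ)/4)) 2 ℙ
              ≤ ENNReal.ofReal (A ^ ((1:ℝ)/4) * ρ^m) := by
          intro m _
          refine le_trans (WID.eLpNorm_quarter (hSmeas m) (hSnn m)) ?_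
          calc (∫⁻ ω, ENNReal.ofReal (S m ω) ∂ℙ)^((1:ℝ)/4)
              ≤ (ENNReal.ofReal (A * ((2:ℝ)^m)⁻¹))^((1:ℝ)/4) :=
                ENNReal.rpow_le_rpow (hSlint m) (by norm_num)
            _ = ENNReal.ofReal ((A * ((2:ℝ)^m)⁻¹)^((1:ℝ)/4)) :=
                ENNReal.ofReal_rpow_of_nonneg (by positivity) (by norm_num)
            _ = ENNReal.ofReal (A^((1:ℝ)/4) * ρ^m) := by
                congr 1
                rw [Real.mul_rpow hA0 (by positivity)]
                congr 1
                rw [← inv_pow, ← Real.rpow_natCast ((2:ℝ)⁻¹) m,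
                  ← Real.rpow_mul (by norm_num), hρdef,
                  ← Real.rpow_natCast (((2:ℝ)⁻¹) ^ ((1:ℝ)/4)) m,
                  ← Real.rpow_mul (by norm_num)]
                ring_nf
        refine le_trans (Finset.sum_le_sum hterm) ?_
        rw [← ENNReal.ofReal_sum_of_nonneg (fun m _ => by
          have := Real.rpow_nonneg hA0 ((1:ℝ)/4)
          positivity)]
        apply ENNReal.ofReal_le_ofReal
        rw [← Finset.mul_sum, mul_assoc]
        apply mul_le_mul_of_nonneg_left _ (Real.rpow_nonneg hA0 _)
        exact WID.geom_Ioc hρ0.le hρ1 n N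
    calc (eLpNorm (G n N) 2 ℙ)^2
        ≤ (ENNReal.ofReal (A^((1:ℝ)/4) * ρ^(n+1) * (1-ρ)⁻¹))^2 := by gcongr
      _ = _ := rfl
  -- assembly
  have main : ∀ n : ℕ, |∫ ω, (⨆ t : Set.Icc (0:ℝ) T,
      |M (t:ℝ) ω - M ((⌊(2:ℝ)^n * (t:ℝ)⌋ : ℝ) / (2:ℝ)^n) ω|) ^ 2 ∂ℙ|
      ≤ (A ^ ((1:ℝ)/4) * ρ^(n+1) * (1-ρ)⁻¹) ^ 2 := by
    intro n
    set c : ℝ := A ^ ((1:ℝ)/4) * ρ^(n+1) * (1-ρ)⁻¹ with hcdef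
    have hc0 : 0 ≤ c := by
      rw [hcdef]
      have : (0:ℝ) ≤ (1-ρ)⁻¹ := inv_nonneg.2 (by linarith)
      have h4 : (0:ℝ) ≤ A ^ ((1:ℝ)/4) := Real.rpow_nonneg hA0 _
      positivity
    have h1 := norm_integral_le_lintegral_norm (μ := ℙ)
      (f := fun ω => (⨆ t : Set.Icc (0:ℝ) T,
        |M (t:ℝ) ω - M ((⌊(2:ℝ)^n * (t:ℝ)⌋ : ℝ) / (2:ℝ)^n) ω|) ^ 2)
    rw [Real.norm_eq_abs] at h1
    have h2 : ∫⁻ ω, ENNReal.ofReal ‖(⨆ t : Set.Icc (0:ℝ) T,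
        |M (t:ℝ) ω - M ((⌊(2:ℝ)^n * (t:ℝ)⌋ : ℝ) / (2:ℝ)^n) ω|) ^ 2‖ ∂ℙ
        ≤ (ENNReal.ofReal c) ^ 2 := by
      have h3 : ∀ ω, ENNReal.ofReal ‖(⨆ t : Set.Icc (0:ℝ) T,
          |M (t:ℝ) ω - M ((⌊(2:ℝ)^n * (t:ℝ)⌋ : ℝ) / (2:ℝ)^n) ω|) ^ 2‖
          ≤ ⨆ N, (ENNReal.ofReal (G n N ω)) ^ 2 := by
        intro ω
        rw [Real.norm_eq_abs, abs_of_nonneg (sq_nonneg _)]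
        exact key4 n ω
      calc ∫⁻ ω, ENNReal.ofReal ‖(⨆ t : Set.Icc (0:ℝ) T,
          |M (t:ℝ) ω - M ((⌊(2:ℝ)^n * (t:ℝ)⌋ : ℝ) / (2:ℝ)^n) ω|) ^ 2‖ ∂ℙ
          ≤ ∫⁻ ω, ⨆ N, (ENNReal.ofReal (G n N ω)) ^ 2 ∂ℙ := lintegral_mono h3
        _ = ⨆ N, ∫⁻ ω, (ENNReal.ofReal (G n N ω)) ^ 2 ∂ℙ := by
            apply lintegral_iSup
            · intro N
              exact ((hGmeas n N).ennreal_ofReal).pow_const 2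
            · intro N N' hNN'
              intro ω
              simp only
              gcongr
              exact hGmono n N N' hNN' ω
        _ ≤ (ENNReal.ofReal c) ^ 2 := by
            rw [hcdef]
            exact iSup_le fun N => key5 n N
    calc |∫ ω, (⨆ t : Set.Icc (0:ℝ) T,
        |M (t:ℝ) ω - M ((⌊(2:ℝ)^n * (t:ℝ)⌋ : ℝ) / (2:ℝ)^n) ω|) ^ 2 ∂ℙ|
        ≤ (∫⁻ ω, ENNReal.ofReal ‖(⨆ t : Set.Icc (0:ℝ) T,
          |M (t:ℝ) ω - M ((⌊(2:ℝ)^n * (t:ℝ)⌋ : ℝ) / (2:ℝ)^n) ω|) ^ 2‖ ∂ℙ).toReal := h1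
      _ ≤ ((ENNReal.ofReal c) ^ 2).toReal := by
          apply ENNReal.toReal_mono _ h2
          exact ENNReal.pow_ne_top ENNReal.ofReal_ne_top
      _ = c ^ 2 := by
          rw [ENNReal.toReal_pow, ENNReal.toReal_ofReal hc0]
  -- final squeeze
  have hlim : Tendsto (fun n : ℕ => (A ^ ((1:ℝ)/4) * ρ^(n+1) * (1-ρ)⁻¹) ^ 2)
      atTop (nhds 0) := by
    have h1 : Tendsto (fun n : ℕ => ρ^n) atTop (nhds 0) :=
      tendsto_pow_atTop_nhds_zero_of_lt_one hρ0.le hρ1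
    have h2 : Tendsto (fun n : ℕ => ρ^(n+1)) atTop (nhds 0) :=
      h1.comp (tendsto_add_atTop_nat 1)
    have h3 : Tendsto (fun n : ℕ => (A ^ ((1:ℝ)/4) * ρ^(n+1) * (1-ρ)⁻¹) ^ 2)
        atTop (nhds ((A ^ ((1:ℝ)/4) * 0 * (1-ρ)⁻¹) ^ 2)) := by
      apply Filter.Tendsto.pow
      exact (tendsto_const_nhds.mul h2).mul tendsto_const_nhds
    simpa using h3
  apply squeeze_zero_norm _ hlim
  intro n
  rw [Real.norm_eq_abs]
  exact main n
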